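/- Let G be a finite group and K an idempotent semifield. Every indecomposable representation V of G over K with associated subgroup H is isomorphic to the quotient of the regular representation K[G] by the module congruence identifying g with gh for all g ∈ G and h ∈ H; this quotient is a free K-module with basis the set G/H of left cosets. -/

import Mathlib

section helpers

lemma idem_add_eq_zero {K : Type*} [AddCommMonoid K] (hidem : ∀ a : K, a + a = a)
    {a b : K} (h : a + b = 0) : a = 0 := by
  have h1 : a + (a + b) = a := by rw [h, add_zero]
  have h2 : a + (a + b) = 0 := by rw [← add_assoc, hidem, h]
  exact h1.symm.trans h2

lemma idem_sum_eq_zero {K : Type*} [AddCommMonoid K] (hidem : ∀ a : K, a + a = a)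
    {ι : Type*} (s : Finset ι) (f : ι → K) :
    (∑ i ∈ s, f i) = 0 → ∀ i ∈ s, f i = 0 := by
  classical
  induction s using Finset.induction_on with
  | empty => intro _ i hi; simp at hi
  | @insert a s ha ih =>
    intro h i hi
    rw [Finset.sum_insert ha] at h
    have h1 : f a = 0 := idem_add_eq_zero hidem h
    have h2 : ∑ j ∈ s, f j = 0 := idem_add_eq_zero hidem (by rwa [add_comm] at h)
    rcases Finset.mem_insert.mp hi with rfl | hi
    · exact h1
    · exact ih h2 i hi

lemma idem_pow_eq_one {K : Type*} [Semifield K] (hidem : ∀ a : K, a + a = a)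
    {c : K} {m : ℕ} (hm : m ≠ 0) (h : c ^ m = 1) : c = 1 := by
  obtain ⟨m', rfl⟩ : ∃ m', m = m' + 1 :=
    ⟨m - 1, (Nat.succ_pred_eq_of_pos (Nat.pos_of_ne_zero hm)).symm⟩
  set b : K := ∑ k ∈ Finset.range (m' + 1), c ^ k with hb
  have hb1 : b + 1 = b := by
    rw [hb, Finset.sum_range_succ']
    simp only [pow_zero]
    rw [add_assoc, hidem]
  have e1 : b * c = ∑ k ∈ Finset.range (m' + 1), c ^ (k + 1) := by
    rw [hb, Finset.sum_mul]
    exact Finset.sum_congr rfl fun k _ => by rw [← pow_succ]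
  have e2 : b * c + 1 = b * c := by
    rw [e1, Finset.sum_range_succ, h, add_assoc, hidem]
  have e3 : ∑ k ∈ Finset.range (m' + 2), c ^ k = b * c + 1 := by
    rw [Finset.sum_range_succ', e1]
    simp only [pow_zero]
  have e4 : ∑ k ∈ Finset.range (m' + 2), c ^ k = b + 1 := by
    rw [Finset.sum_range_succ, ← hb, h]
  have hbc : b * c = b := by rw [← e2, ← e3, e4, hb1]
  have hb0 : b ≠ 0 := by
    intro h0
    rw [h0, zero_add] at hb1
    exact one_ne_zero hb1
  have : b * c = b * 1 := by rw [mul_one, hbc]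
  exact mul_left_cancel₀ hb0 this

lemma pi_decomp {K : Type*} [Semiring K] {n : ℕ} (x : Fin n → K) :
    x = ∑ i, x i • (Pi.single i 1 : Fin n → K) := by
  funext k
  rw [Finset.sum_apply]
  have h1 : ∀ j : Fin n, (x j • (Pi.single j 1 : Fin n → K)) k = if k = j then x k else 0 := by
    intro j
    rw [Pi.smul_apply, Pi.single_apply, smul_eq_mul]
    by_cases h : k = j
    · subst h; simp
    · simp [h]
  simp only [h1]
  simp

lemma linmap_apply_coord {K : Type*} [CommSemiring K] {n : ℕ}
    (f : (Fin n → K) →ₗ[K] (Fin n → K)) (x : Fin n → K) (i : Fin n) :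
    f x i = ∑ j, f (Pi.single j 1) i * x j := by
  conv_lhs => rw [pi_decomp x]
  rw [map_sum, Finset.sum_apply]
  exact Finset.sum_congr rfl fun j _ => by
    rw [map_smul, Pi.smul_apply, smul_eq_mul, mul_comm]

lemma row_unique {K : Type*} [Semifield K] (hidem : ∀ a : K, a + a = a) {n : ℕ}
    (A B : Fin n → Fin n → K)
    (hAB : ∀ i j, ∑ k, A i k * B k j = if i = j then (1 : K) else 0)
    (hBA : ∀ i j, ∑ k, B i k * A k j = if i = j then (1 : K) else 0) (i : Fin n) :
    ∃! k, A i k ≠ 0 := by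
  have h1 : ∑ k, A i k * B k i = 1 := by rw [hAB i i, if_pos rfl]
  have hex : ∃ k, A i k ≠ 0 ∧ B k i ≠ 0 := by
    by_contra hc
    push_neg at hc
    have hz : ∑ k, A i k * B k i = 0 := Finset.sum_eq_zero fun k _ => by
      rcases eq_or_ne (A i k) 0 with h | h
      · rw [h, zero_mul]
      · rw [hc k h, mul_zero]
    rw [hz] at h1
    exact one_ne_zero h1.symm
  obtain ⟨k₀, hA0, hB0⟩ := hex
  refine ⟨k₀, hA0, fun k hk => ?_⟩
  by_contra hne
  have h2 : ∑ m, B k₀ m * A m k = 0 := by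
    rw [hBA k₀ k, if_neg (fun h => hne (h.symm))]
  have := idem_sum_eq_zero hidem Finset.univ (fun m => B k₀ m * A m k) h2 i (Finset.mem_univ i)
  exact mul_ne_zero hB0 hk this

def coordSubmodule (K : Type*) [Semifield K] {n : ℕ} (S : Set (Fin n)) :
    Submodule K (Fin n → K) where
  carrier := {x | ∀ i ∉ S, x i = 0}
  add_mem' := fun ha hb i hi => by rw [Pi.add_apply, ha i hi, hb i hi, add_zero]
  zero_mem' := fun i _ => rfl
  smul_mem' := fun c x hx i hi => by rw [Pi.smul_apply, hx i hi, smul_zero]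

lemma mem_coordSubmodule {K : Type*} [Semifield K] {n : ℕ} {S : Set (Fin n)}
    {x : Fin n → K} : x ∈ coordSubmodule K S ↔ ∀ i ∉ S, x i = 0 := Iff.rfl

end helpers



/-- Every indecomposable representation `V = K^n` of a finite group `G` over
an idempotent semifield `K`, with associated subgroup `H` (the stabilizer of
a basis line), is isomorphic to the quotient of the regular representation
`K[G]` by the module congruence identifying `g` with `gh` for `g ∈ G`,
`h ∈ H`: there is an equivariant surjection `π : K[G] → V` whose kernel
congruence is exactly the congruence generated by these identifications,
and `V` is a free `K`-module with basis the set `G ⧸ H` of left cosets. -/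
theorem indecomposable_is_quotient_of_regular
    (K G : Type*) [Semifield K] (hidem : ∀ a : K, a + a = a)
    [Group G] [Fintype G] (n : ℕ) (ρ : Representation K G (Fin n → K))
    (hindec : ¬ ∃ p q : Submodule K (Fin n → K),
        (∀ g : G, ∀ y ∈ p, ρ g y ∈ p) ∧ (∀ g : G, ∀ y ∈ q, ρ g y ∈ q) ∧
        p ≠ ⊥ ∧ q ≠ ⊥ ∧
        ∀ z : Fin n → K, ∃! w : p × q, (w.1 : Fin n → K) + (w.2 : Fin n → K) = z)
    (i₀ : Fin n) (H : Subgroup G)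
    (hH : ∀ g : G, g ∈ H ↔
        Submodule.map (ρ g) (Submodule.span K {Pi.single i₀ (1 : K)}) =
          Submodule.span K {Pi.single i₀ (1 : K)}) :
    ∃ π : MonoidAlgebra K G →ₗ[K] (Fin n → K),
      Function.Surjective π ∧
      (∀ (g : G) (x : MonoidAlgebra K G),
          π (MonoidAlgebra.single g (1 : K) * x) = ρ g (π x)) ∧
      (∀ a b : MonoidAlgebra K G,
          π a = π b ↔
            addConGen
              (fun a b : MonoidAlgebra K G =>
                ∃ (g h : G) (c : K), h ∈ H ∧
                  a = MonoidAlgebra.single g c ∧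
                  b = MonoidAlgebra.single (g * h) c) a b) ∧
      Nonempty (Module.Basis (G ⧸ H) K (Fin n → K)) := by
  classical
  -- inverses
  have hone : ∀ (g : G) (x : Fin n → K), ρ g (ρ g⁻¹ x) = x := by
    intro g x
    have h1 : ρ g * ρ g⁻¹ = 1 := by rw [← map_mul, mul_inv_cancel, map_one]
    calc ρ g (ρ g⁻¹ x) = (ρ g * ρ g⁻¹) x := rfl
      _ = x := by rw [h1]; rfl
  have hone' : ∀ (g : G) (x : Fin n → K), ρ g⁻¹ (ρ g x) = x := by
    intro g x
    have := hone g⁻¹ x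
    rwa [inv_inv] at this
  -- monomial structure
  have hmono : ∀ (g : G) (j : Fin n), ∃! i, ρ g (Pi.single j 1) i ≠ 0 := by
    intro g j
    set A : Fin n → Fin n → K := fun i j => ρ g (Pi.single j 1) i with hA
    set B : Fin n → Fin n → K := fun i j => ρ g⁻¹ (Pi.single j 1) i with hB
    have hAB : ∀ i j', ∑ k, A i k * B k j' = if i = j' then (1 : K) else 0 := by
      intro i j'
      have h2 : ρ g (ρ g⁻¹ (Pi.single j' 1)) i = ∑ k, A i k * B k j' := by
        rw [linmap_apply_coord]
      rw [hone] at h2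
      rw [← h2, Pi.single_apply]
    have hBA : ∀ i j', ∑ k, B i k * A k j' = if i = j' then (1 : K) else 0 := by
      intro i j'
      have h2 : ρ g⁻¹ (ρ g (Pi.single j' 1)) i = ∑ k, B i k * A k j' := by
        rw [linmap_apply_coord]
      rw [hone'] at h2
      rw [← h2, Pi.single_apply]
    have h1 : ∀ i j', ∑ k, A k i * B j' k = if i = j' then (1 : K) else 0 := by
      intro i j'
      have : ∑ k, A k i * B j' k = ∑ k, B j' k * A k i :=
        Finset.sum_congr rfl fun k _ => mul_comm _ _
      rw [this, hBA j' i]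
      by_cases h : i = j' <;> simp [h, eq_comm]
    have h2 : ∀ i j', ∑ k, B k i * A j' k = if i = j' then (1 : K) else 0 := by
      intro i j'
      have : ∑ k, B k i * A j' k = ∑ k, A j' k * B k i :=
        Finset.sum_congr rfl fun k _ => mul_comm _ _
      rw [this, hAB j' i]
      by_cases h : i = j' <;> simp [h, eq_comm]
    exact row_unique hidem (fun i k => A k i) (fun i k => B k i)
      (fun i j' => h1 i j') (fun i j' => h2 i j') j
  choose t ht using hmono
  set cc : G → Fin n → K := fun g j => ρ g (Pi.single j 1) (t g j) with hcc
  have hcne : ∀ g j, cc g j ≠ 0 := fun g j => (ht g j).1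
  have hvec : ∀ (g : G) (j : Fin n),
      ρ g (Pi.single j 1) = cc g j • (Pi.single (t g j) 1 : Fin n → K) := by
    intro g j
    funext k
    rcases eq_or_ne k (t g j) with rfl | hk
    · rw [Pi.smul_apply, Pi.single_eq_same, smul_eq_mul, mul_one]
    · have h0 : ρ g (Pi.single j 1) k = 0 := by
        by_contra hcon
        exact hk ((ht g j).2 k hcon)
      rw [h0, Pi.smul_apply, Pi.single_apply, if_neg hk, smul_zero]
  have hchar : ∀ (g : G) (j i : Fin n) (c : K), c ≠ 0 →
      ρ g (Pi.single j 1) = c • (Pi.single i 1 : Fin n → K) → t g j = i := by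
    intro g j i c hc he
    refine ((ht g j).2 i ?_).symm
    show ρ g (Pi.single j 1) i ≠ 0
    rw [he, Pi.smul_apply, Pi.single_eq_same, smul_eq_mul, mul_one]
    exact hc
  have ht_mul : ∀ (g g' : G) (j : Fin n), t (g * g') j = t g (t g' j) := by
    intro g g' j
    apply hchar (g * g') j _ (cc g' j * cc g (t g' j))
      (mul_ne_zero (hcne g' j) (hcne g (t g' j)))
    have h1 : ρ (g * g') (Pi.single j 1) = ρ g (ρ g' (Pi.single j 1)) := by
      rw [map_mul]; rfl
    rw [h1, hvec g' j, map_smul, hvec g (t g' j), smul_smul]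
  have ht_one : ∀ j : Fin n, t 1 j = j := by
    intro j
    apply hchar 1 j j 1 one_ne_zero
    rw [map_one, one_smul]
    rfl
  have ht_inv : ∀ (g : G) (j : Fin n), t g⁻¹ (t g j) = j := by
    intro g j
    rw [← ht_mul, inv_mul_cancel, ht_one]
  -- transitivity
  have htrans : ∀ i : Fin n, ∃ g : G, t g i₀ = i := by
    by_contra hc
    push_neg at hc
    obtain ⟨i₁, hi₁⟩ := hc
    apply hindec
    set S : Set (Fin n) := {i | ∃ g : G, t g i₀ = i} with hS
    have hi₀S : i₀ ∈ S := ⟨1, ht_one i₀⟩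
    have hi₁S : i₁ ∉ S := fun ⟨g, hg⟩ => hi₁ g hg
    have hSmem : ∀ (g : G) (j : Fin n), j ∈ S → t g j ∈ S := by
      rintro g j ⟨g', rfl⟩
      exact ⟨g * g', ht_mul g g' i₀⟩
    have hSmem' : ∀ (g : G) (j : Fin n), t g j ∈ S → j ∈ S := by
      intro g j hj
      have := hSmem g⁻¹ _ hj
      rwa [ht_inv] at this
    refine ⟨coordSubmodule K S, coordSubmodule K Sᶜ, ?_, ?_, ?_, ?_, ?_⟩
    · intro g y hy i hi
      rw [linmap_apply_coord (ρ g) y i]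
      apply Finset.sum_eq_zero
      intro j _
      rcases eq_or_ne (y j) 0 with h | h
      · rw [h, mul_zero]
      · have hjS : j ∈ S := by
          by_contra hj
          exact h (hy j hj)
        rcases eq_or_ne (ρ g (Pi.single j 1) i) 0 with h2 | h2
        · rw [h2, zero_mul]
        · have hiS : i ∈ S := by
            rw [(ht g j).2 i h2]
            exact hSmem g j hjS
          exact absurd hiS hi
    · intro g y hy i hi
      rw [Set.notMem_compl_iff] at hi
      rw [linmap_apply_coord (ρ g) y i]
      apply Finset.sum_eq_zero
      intro j _
      rcases eq_or_ne (y j) 0 with h | h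
      · rw [h, mul_zero]
      · have hjS : j ∉ S := by
          intro hj
          exact h (hy j (Set.notMem_compl_iff.mpr hj))
        rcases eq_or_ne (ρ g (Pi.single j 1) i) 0 with h2 | h2
        · rw [h2, zero_mul]
        · have : j ∈ S := by
            apply hSmem' g
            rw [← (ht g j).2 i h2]
            exact hi
          exact absurd this hjS
    · intro hbot
      have hmem : (Pi.single i₀ 1 : Fin n → K) ∈ coordSubmodule K S := by
        intro i hi
        rw [Pi.single_apply, if_neg (fun h : i = i₀ => hi (by rw [h]; exact hi₀S))]
      rw [hbot, Submodule.mem_bot] at hmem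
      have := congrFun hmem i₀
      rw [Pi.single_eq_same] at this
      exact one_ne_zero this
    · intro hbot
      have hmem : (Pi.single i₁ 1 : Fin n → K) ∈ coordSubmodule K Sᶜ := by
        intro i hi
        rw [Set.notMem_compl_iff] at hi
        rw [Pi.single_apply, if_neg (fun h : i = i₁ => hi₁S (by rw [← h]; exact hi))]
      rw [hbot, Submodule.mem_bot] at hmem
      have := congrFun hmem i₁
      rw [Pi.single_eq_same] at this
      exact one_ne_zero this
    · intro z
      refine ⟨(⟨fun i => if i ∈ S then z i else 0, ?_⟩, ⟨fun i => if i ∈ S then 0 else z i, ?_⟩), ?_, ?_⟩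
      · intro i hi
        exact if_neg hi
      · intro i hi
        rw [Set.notMem_compl_iff] at hi
        exact if_pos hi
      · funext i
        show (if i ∈ S then z i else 0) + (if i ∈ S then 0 else z i) = z i
        by_cases h : i ∈ S <;> simp [h]
      · rintro ⟨⟨w1, hw1⟩, ⟨w2, hw2⟩⟩ hw
        have hw' : ∀ i, w1 i + w2 i = z i := fun i => congrFun hw i
        have e1 : w1 = fun i => if i ∈ S then z i else 0 := by
          funext i
          by_cases h : i ∈ S
          · rw [if_pos h, ← hw' i, hw2 i (Set.notMem_compl_iff.mpr h), add_zero]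
          · rw [if_neg h, hw1 i h]
        have e2 : w2 = fun i => if i ∈ S then 0 else z i := by
          funext i
          by_cases h : i ∈ S
          · rw [if_pos h, hw2 i (Set.notMem_compl_iff.mpr h)]
          · rw [if_neg h, ← hw' i, hw1 i h, zero_add]
        exact Prod.ext (Subtype.ext e1) (Subtype.ext e2)
  -- stabilizer facts
  have hHt : ∀ h : G, h ∈ H → t h i₀ = i₀ := by
    intro h hh
    have hmap := (hH h).mp hh
    have hv1 : (Pi.single i₀ 1 : Fin n → K) ∈ Submodule.span K {(Pi.single i₀ 1 : Fin n → K)} :=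
      Submodule.mem_span_singleton_self _
    have hmem : ρ h (Pi.single i₀ 1) ∈ Submodule.span K {(Pi.single i₀ 1 : Fin n → K)} := by
      rw [← hmap]
      exact Submodule.mem_map_of_mem hv1
    obtain ⟨a, ha⟩ := Submodule.mem_span_singleton.mp hmem
    by_contra hne
    have h2 := congrFun ha (t h i₀)
    rw [Pi.smul_apply, Pi.single_apply, if_neg hne, smul_zero] at h2
    exact hcne h i₀ h2.symm
  have htH : ∀ g : G, t g i₀ = i₀ → g ∈ H := by
    intro g hg
    apply (hH g).mpr
    rw [Submodule.map_span, Set.image_singleton]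
    have himg : ρ g (Pi.single i₀ 1) = cc g i₀ • (Pi.single i₀ 1 : Fin n → K) := by
      rw [hvec, hg]
    rw [himg]
    apply le_antisymm
    · rw [Submodule.span_le, Set.singleton_subset_iff]
      exact Submodule.smul_mem _ _ (Submodule.mem_span_singleton_self _)
    · rw [Submodule.span_le, Set.singleton_subset_iff]
      have hmem2 : (cc g i₀)⁻¹ • (cc g i₀ • (Pi.single i₀ 1 : Fin n → K)) ∈
          Submodule.span K {cc g i₀ • (Pi.single i₀ 1 : Fin n → K)} :=
        Submodule.smul_mem _ _ (Submodule.mem_span_singleton_self _)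
      rwa [smul_smul, inv_mul_cancel₀ (hcne g i₀), one_smul] at hmem2
  have hρH : ∀ h : G, h ∈ H → ρ h (Pi.single i₀ 1) = (Pi.single i₀ 1 : Fin n → K) := by
    intro h hh
    have hc1 : cc h i₀ = 1 := by
      have hpow : ∀ m : ℕ, ρ (h ^ m) (Pi.single i₀ 1) = (cc h i₀) ^ m • (Pi.single i₀ 1 : Fin n → K) := by
        intro m
        induction m with
        | zero =>
          rw [pow_zero, pow_zero, map_one, one_smul]
          rfl
        | succ m ih =>
          have : ρ (h ^ (m + 1)) (Pi.single i₀ 1) = ρ (h ^ m) (ρ h (Pi.single i₀ 1)) := by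
            rw [pow_succ, map_mul]
            rfl
          rw [this, hvec h i₀, hHt h hh, map_smul, ih, smul_smul, ← pow_succ']
      have h1 := hpow (orderOf h)
      rw [pow_orderOf_eq_one, map_one] at h1
      rw [Module.End.one_apply] at h1
      have h2 := congrFun h1 i₀
      rw [Pi.smul_apply, Pi.single_eq_same, smul_eq_mul, mul_one] at h2
      exact idem_pow_eq_one hidem (orderOf_pos h).ne' h2.symm
    rw [hvec h i₀, hHt h hh, hc1, one_smul]
  have hcosetv : ∀ g g' : G, (g : G ⧸ H) = (g' : G ⧸ H) →
      ρ g (Pi.single i₀ 1) = ρ g' (Pi.single i₀ 1) := by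
    intro g g' hgg
    have hh : g⁻¹ * g' ∈ H := QuotientGroup.eq.mp hgg
    have he : g' = g * (g⁻¹ * g') := by rw [mul_inv_cancel_left]
    have : ρ g' (Pi.single i₀ 1) = ρ g (ρ (g⁻¹ * g') (Pi.single i₀ 1)) := by
      conv_lhs => rw [he, map_mul]
      rfl
    rw [this, hρH _ hh]
  have hcosett : ∀ g g' : G, (g : G ⧸ H) = (g' : G ⧸ H) → t g i₀ = t g' i₀ := by
    intro g g' h
    have : ρ g' (Pi.single i₀ 1) = cc g i₀ • (Pi.single (t g i₀) 1 : Fin n → K) := by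
      rw [← hcosetv g g' h, hvec]
    exact (hchar g' i₀ _ _ (hcne g i₀) this).symm
  have hinj : ∀ g g' : G, t g i₀ = t g' i₀ → (g : G ⧸ H) = (g' : G ⧸ H) := by
    intro g g' hgg
    rw [QuotientGroup.eq]
    apply htH
    rw [ht_mul, ← hgg, ht_inv]
  set φ : G ⧸ H → Fin n := fun x => t x.out i₀ with hφ
  have hφmk : ∀ g : G, φ (g : G ⧸ H) = t g i₀ := by
    intro g
    exact hcosett ((g : G ⧸ H)).out g (QuotientGroup.out_eq' _)
  have hφbij : Function.Bijective φ := by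
    constructor
    · intro x y hxy
      rw [← QuotientGroup.out_eq' x, ← QuotientGroup.out_eq' y]
      exact hinj _ _ hxy
    · intro i
      obtain ⟨g, hg⟩ := htrans i
      exact ⟨(g : G ⧸ H), by rw [hφmk, hg]⟩
  -- the projection map
  set π : MonoidAlgebra K G →ₗ[K] (Fin n → K) :=
    Finsupp.linearCombination K (fun g : G => ρ g (Pi.single i₀ 1)) ∘ₗ
      (MonoidAlgebra.coeffLinearEquiv K).toLinearMap with hπdef
  have hπsingle : ∀ (g : G) (c : K),
      π (MonoidAlgebra.single g c) = c • ρ g (Pi.single i₀ 1) := by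
    intro g c
    exact Finsupp.linearCombination_single K (v := fun g : G => ρ g (Pi.single i₀ 1)) c g
  have hπsum : ∀ a : MonoidAlgebra K G, π a = ∑ g : G, a.coeff g • ρ g (Pi.single i₀ 1) := by
    intro a
    rw [hπdef]
    show a.coeff.sum (fun g c => c • ρ g (Pi.single i₀ 1)) = _
    exact Finsupp.sum_fintype _ _ (fun g => by rw [zero_smul])
  refine ⟨π, ?_, ?_, ?_, ⟨(Pi.basisFun K (Fin n)).reindex (Equiv.ofBijective φ hφbij).symm⟩⟩
  · -- surjectivity
    rw [← LinearMap.range_eq_top, eq_top_iff]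
    intro z _
    have hz : z = ∑ i : Fin n, z i • (Pi.single i 1 : Fin n → K) := pi_decomp z
    rw [hz]
    apply Submodule.sum_mem
    intro i _
    apply Submodule.smul_mem
    obtain ⟨g, hg⟩ := htrans i
    have he : (Pi.single i 1 : Fin n → K) = π (MonoidAlgebra.single g (cc g i₀)⁻¹) := by
      rw [hπsingle, hvec, hg, smul_smul, inv_mul_cancel₀ (hcne g i₀), one_smul]
    rw [he]
    exact LinearMap.mem_range_self π _
  · -- equivariance
    intro g x
    induction x using MonoidAlgebra.induction_linear with
    | zero => rw [mul_zero, map_zero, map_zero]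
    | add f f' hf hf' => rw [mul_add, map_add, map_add, hf, hf', map_add]
    | single g' c =>
      have h1 : MonoidAlgebra.single g (1 : K) * MonoidAlgebra.single g' c
          = MonoidAlgebra.single (g * g') c := by
        rw [MonoidAlgebra.single_mul_single, one_mul]
      rw [h1, hπsingle, hπsingle, map_smul, map_mul]
      rfl
  · -- kernel congruence
    intro a b
    set rr : MonoidAlgebra K G → MonoidAlgebra K G → Prop := fun a b =>
      ∃ (g h : G) (c : K), h ∈ H ∧
        a = MonoidAlgebra.single g c ∧
        b = MonoidAlgebra.single (g * h) c with hrr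
    have hsing_sum : ∀ (k : G) (s : Finset G) (f : G → K),
        MonoidAlgebra.single k (∑ g ∈ s, f g) = ∑ g ∈ s, MonoidAlgebra.single k (f g) :=
      fun k s f => map_sum (MonoidAlgebra.singleAddHom k) f s
    constructor
    · intro hab
      have key1 : ∀ (f : MonoidAlgebra K G) (x : G ⧸ H),
          π f (φ x) = (∑ g ∈ Finset.univ.filter (fun g : G => (g : G ⧸ H) = x), f.coeff g)
            * cc x.out i₀ := by
        intro f x
        rw [hπsum, Finset.sum_apply, Finset.sum_mul, Finset.sum_filter]
        apply Finset.sum_congr rfl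
        intro g _
        by_cases hg : (g : G ⧸ H) = x
        · rw [if_pos hg, Pi.smul_apply, smul_eq_mul]
          congr 1
          have h1 : ρ g (Pi.single i₀ 1) = ρ x.out (Pi.single i₀ 1) :=
            hcosetv g x.out (by rw [QuotientGroup.out_eq']; exact hg)
          rw [h1]
        · rw [if_neg hg, Pi.smul_apply, smul_eq_mul]
          have hne : φ x ≠ t g i₀ := by
            intro hcon
            apply hg
            have h2 : t g i₀ = t x.out i₀ := by rw [← hcon]
            have h3 := hinj g x.out h2
            rwa [QuotientGroup.out_eq'] at h3
          rw [hvec g i₀, Pi.smul_apply, Pi.single_apply, if_neg hne, smul_zero, mul_zero]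
      have key2 : ∀ x : G ⧸ H,
          (∑ g ∈ Finset.univ.filter (fun g : G => (g : G ⧸ H) = x), a.coeff g)
            = ∑ g ∈ Finset.univ.filter (fun g : G => (g : G ⧸ H) = x), b.coeff g := by
        intro x
        have h1 : (∑ g ∈ Finset.univ.filter (fun g : G => (g : G ⧸ H) = x), a.coeff g) * cc x.out i₀
            = (∑ g ∈ Finset.univ.filter (fun g : G => (g : G ⧸ H) = x), b.coeff g) * cc x.out i₀ := by
          rw [← key1 a x, ← key1 b x, hab]
        exact mul_right_cancel₀ (hcne x.out i₀) h1
      have hdecomp : ∀ f : MonoidAlgebra K G, f = ∑ g : G, MonoidAlgebra.single g (f.coeff g) :=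
        fun f => MonoidAlgebra.coeff_injective (by
          rw [MonoidAlgebra.coeff_sum]; simp only [MonoidAlgebra.coeff_single]
          exact (Finsupp.univ_sum_single _).symm)
      have hrel1 : ∀ (g : G) (c : K),
          addConGen rr (MonoidAlgebra.single g c)
            (MonoidAlgebra.single ((g : G ⧸ H)).out c) := by
        intro g c
        obtain ⟨h, hh⟩ := QuotientGroup.mk_out_eq_mul H g
        exact AddConGen.Rel.of _ _ ⟨g, ↑h, c, h.2, rfl, by rw [hh]⟩
      have hrelsum : ∀ (s : Finset G) (f : G → K),
          addConGen rr (∑ g ∈ s, MonoidAlgebra.single g (f g))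
            (∑ g ∈ s, MonoidAlgebra.single ((g : G ⧸ H)).out (f g)) := by
        intro s f
        induction s using Finset.induction_on with
        | empty => simpa using (addConGen rr).refl 0
        | @insert g s hgs ih =>
          rw [Finset.sum_insert hgs, Finset.sum_insert hgs]
          exact (addConGen rr).add (hrel1 g (f g)) ih
      have hgroup : ∀ f : MonoidAlgebra K G,
          ∑ g : G, MonoidAlgebra.single ((g : G ⧸ H)).out (f.coeff g)
            = ∑ x : G ⧸ H, MonoidAlgebra.single x.out
                (∑ g ∈ Finset.univ.filter (fun g : G => (g : G ⧸ H) = x), f.coeff g) := by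
        intro f
        have h1 := Finset.sum_fiberwise_eq_sum_filter Finset.univ Finset.univ
          (fun g : G => (g : G ⧸ H)) (fun g => MonoidAlgebra.single ((g : G ⧸ H)).out (f.coeff g))
        have h2 : Finset.univ.filter (fun g : G => (g : G ⧸ H) ∈ Finset.univ) = Finset.univ :=
          Finset.filter_true_of_mem (fun _ _ => Finset.mem_univ _)
        rw [h2] at h1
        rw [← h1]
        apply Finset.sum_congr rfl
        intro x _
        rw [hsing_sum]
        apply Finset.sum_congr rfl
        intro g hg
        have hgx : (g : G ⧸ H) = x := (Finset.mem_filter.mp hg).2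
        rw [hgx]
      have h1a : addConGen rr a (∑ x : G ⧸ H, MonoidAlgebra.single x.out
          (∑ g ∈ Finset.univ.filter (fun g : G => (g : G ⧸ H) = x), a.coeff g)) := by
        have h2 := hrelsum Finset.univ (fun g => a.coeff g)
        rw [hgroup] at h2
        rw [← hdecomp a] at h2
        exact h2
      have h1b : addConGen rr b (∑ x : G ⧸ H, MonoidAlgebra.single x.out
          (∑ g ∈ Finset.univ.filter (fun g : G => (g : G ⧸ H) = x), b.coeff g)) := by
        have h2 := hrelsum Finset.univ (fun g => b.coeff g)
        rw [hgroup] at h2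
        rw [← hdecomp b] at h2
        exact h2
      refine (addConGen rr).trans h1a ?_
      have heq : (∑ x : G ⧸ H, MonoidAlgebra.single x.out
          (∑ g ∈ Finset.univ.filter (fun g : G => (g : G ⧸ H) = x), a.coeff g))
          = ∑ x : G ⧸ H, MonoidAlgebra.single x.out
          (∑ g ∈ Finset.univ.filter (fun g : G => (g : G ⧸ H) = x), b.coeff g) :=
        Finset.sum_congr rfl (fun x _ => by rw [key2 x])
      rw [heq]
      exact (addConGen rr).symm h1b
    · intro hab
      have hab' : AddConGen.Rel rr a b := hab
      clear hab
      induction hab' with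
      | of x y hxy =>
        obtain ⟨g, h, c, hh, rfl, rfl⟩ := hxy
        rw [hπsingle, hπsingle]
        have hgh : ρ (g * h) (Pi.single i₀ 1) = ρ g (Pi.single i₀ 1) := by
          rw [map_mul]
          show ρ g (ρ h (Pi.single i₀ 1)) = ρ g (Pi.single i₀ 1)
          rw [hρH h hh]
        rw [hgh]
      | refl x => rfl
      | symm _ ih => exact ih.symm
      | trans _ _ ih1 ih2 => exact ih1.trans ih2
      | add _ _ ih1 ih2 => rw [map_add, map_add, ih1, ih2]
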